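/- Suppose a finite connected graph G is the union of two subgraphs A and B whose graphs contain no odd cycle, such that the intersection A ∩ B is connected and nonempty. Then G contains no odd cycle. -/

import Mathlib

open SimpleGraph

section Aux
variable {W : Type*} {H : SimpleGraph W}

lemma closed_nodup_length_zero {a : W} (p : H.Walk a a) (h : p.support.Nodup) :
    p.length = 0 := by
  cases p with
  | nil => rfl
  | cons h' q =>
    exfalso
    rw [SimpleGraph.Walk.support_cons, List.nodup_cons] at h
    exact h.1 q.end_mem_support

lemma eq_concat_of_mem_edges {a b c : W} (p : H.Walk a b) (hnd : p.support.Nodup)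
    (he : s(b, c) ∈ p.edges) : ∃ (h : H.Adj c b) (q : H.Walk a c), p = q.concat h := by
  induction p with
  | nil => simp at he
  | @cons a z b h r ih =>
    rw [SimpleGraph.Walk.support_cons, List.nodup_cons] at hnd
    rw [SimpleGraph.Walk.edges_cons, List.mem_cons] at he
    rcases he with he | he
    · rw [Sym2.eq_iff] at he
      rcases he with ⟨hb, hc⟩ | ⟨hc, hb⟩
      · exact absurd (hb ▸ r.end_mem_support) hnd.1
      · subst hc
        subst hb
        have hr0 : r.length = 0 := closed_nodup_length_zero r hnd.2
        cases r with
        | nil => exact ⟨h, SimpleGraph.Walk.nil, by simp [SimpleGraph.Walk.concat]⟩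
        | cons _ _ => simp [SimpleGraph.Walk.length_cons] at hr0
    · obtain ⟨h', q, hq⟩ := ih hnd.2 he
      exact ⟨h', SimpleGraph.Walk.cons h q, by rw [hq, SimpleGraph.Walk.concat_cons]⟩

/-- If a graph has no odd cycle, it has no odd closed walk. -/
lemma no_odd_closed_walk (hH : ∀ (v : W) (w : H.Walk v v), w.IsCycle → ¬ Odd w.length) :
    ∀ (v : W) (w : H.Walk v v), ¬ Odd w.length := by
  classical
  suffices Key : ∀ n (v : W) (w : H.Walk v v), w.length = n → ¬ Odd n by
    intro v w hodd
    exact Key w.length v w rfl hodd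
  intro n
  induction n using Nat.strong_induction_on with
  | _ n ih =>
    intro v w hn hodd
    cases w with
    | nil => rw [← hn] at hodd; simp at hodd
    | @cons v x v h q =>
      rw [SimpleGraph.Walk.length_cons] at hn
      by_cases hq : q.support.Nodup
      · by_cases he : s(v, x) ∈ q.edges
        · obtain ⟨h', q', rfl⟩ := eq_concat_of_mem_edges q hq he
          have hq'nd : q'.support.Nodup := by
            rw [SimpleGraph.Walk.support_concat] at hq
            exact hq.of_append_left
          have h0 : q'.length = 0 := closed_nodup_length_zero q' hq'nd
          have hl : (q'.concat h').length = q'.length + 1 := SimpleGraph.Walk.length_concat q' h'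
          rw [← hn, Nat.odd_iff] at hodd
          omega
        · have hc : (SimpleGraph.Walk.cons h q).IsCycle :=
            (SimpleGraph.Walk.cons_isCycle_iff q h).mpr
              ⟨(SimpleGraph.Walk.isPath_def q).mpr hq, he⟩
          exact hH v _ hc (by rw [SimpleGraph.Walk.length_cons, hn]; exact hodd)
      · obtain ⟨y, hy⟩ := List.exists_duplicate_iff_not_nodup.mpr hq
        have hy2 : 2 ≤ q.support.count y := List.duplicate_iff_two_le_count.mp hy
        have hy1 : y ∈ q.support := hy.mem
        have hsplit : (q.takeUntil y hy1).append (q.dropUntil y hy1) = q := q.take_spec hy1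
        have hcount1 : (q.takeUntil y hy1).support.count y = 1 :=
          q.count_support_takeUntil_eq_one hy1
        have hlen1 : (q.takeUntil y hy1).length + (q.dropUntil y hy1).length = q.length := by
          rw [← congrArg SimpleGraph.Walk.length hsplit, SimpleGraph.Walk.length_append]
        have hytail : y ∈ (q.dropUntil y hy1).support.tail := by
          have hc2 : ((q.takeUntil y hy1).append (q.dropUntil y hy1)).support.count y
              = q.support.count y := by rw [hsplit]
          rw [SimpleGraph.Walk.support_append, List.count_append, hcount1] at hc2
          have : 0 < (q.dropUntil y hy1).support.tail.count y := by omega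
          exact List.count_pos_iff.mp this
        cases hd : q.dropUntil y hy1 with
        | nil => rw [hd] at hytail; simp at hytail
        | @cons y z v h2 r =>
          rw [hd] at hytail
          rw [SimpleGraph.Walk.support_cons, List.tail_cons] at hytail
          have hrlen : (r.takeUntil y hytail).length + (r.dropUntil y hytail).length = r.length := by
            rw [← congrArg SimpleGraph.Walk.length (r.take_spec hytail),
              SimpleGraph.Walk.length_append]
          have hodd' : n % 2 = 1 := Nat.odd_iff.mp hodd
          have hdlen : (q.dropUntil y hy1).length = r.length + 1 := by
            rw [hd, SimpleGraph.Walk.length_cons]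
          have hone : Odd (SimpleGraph.Walk.cons h2 (r.takeUntil y hytail)).length ∨
              Odd (SimpleGraph.Walk.cons h
                ((q.takeUntil y hy1).append (r.dropUntil y hytail))).length := by
            rw [Nat.odd_iff, Nat.odd_iff, SimpleGraph.Walk.length_cons,
              SimpleGraph.Walk.length_cons, SimpleGraph.Walk.length_append]
            omega
          rcases hone with ho | ho
          · exact ih _ (by rw [SimpleGraph.Walk.length_cons]; omega) y
              (SimpleGraph.Walk.cons h2 (r.takeUntil y hytail)) rfl ho
          · exact ih _ (by rw [SimpleGraph.Walk.length_cons,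
                SimpleGraph.Walk.length_append]; omega) v
              (SimpleGraph.Walk.cons h ((q.takeUntil y hy1).append (r.dropUntil y hytail))) rfl ho

end Aux


section Aux2
variable {W : Type*} {H : SimpleGraph W}

/-- A graph with no odd closed walk admits a proper 2-coloring. -/
lemma exists_bool_coloring (hH : ∀ (v : W) (w : H.Walk v v), ¬ Odd w.length) :
    ∃ c : W → Bool, ∀ {a b : W}, H.Adj a b → c a ≠ c b := by
  classical
  have hreach : ∀ v : W, H.Reachable v (H.connectedComponentMk v).out :=
    fun v => (ConnectedComponent.eq.mp ((H.connectedComponentMk v).out_eq).symm)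
  refine ⟨fun v => decide (Odd (hreach v).some.length), ?_⟩
  intro a b hadj
  have hcomp : H.connectedComponentMk a = H.connectedComponentMk b :=
    ConnectedComponent.sound hadj.reachable
  set pa := (hreach a).some with hpa
  set pb := (hreach b).some with hpb
  -- closed walk at a : a -> b -> out b = out a -> a
  have hout : (H.connectedComponentMk b).out = (H.connectedComponentMk a).out := by rw [hcomp]
  have hcw := hH a (SimpleGraph.Walk.cons hadj (pb.append (pa.reverse.copy hout.symm rfl)))
  rw [SimpleGraph.Walk.length_cons, SimpleGraph.Walk.length_append,
    SimpleGraph.Walk.length_copy, SimpleGraph.Walk.length_reverse, Nat.odd_iff] at hcw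
  simp only [ne_eq, decide_eq_decide, Nat.odd_iff]
  rw [← hpa, ← hpb]
  omega
end Aux2


/-- Gluing two odd-cycle-free subgraphs along a connected nonempty intersection
yields an odd-cycle-free graph: if the connected graph `G` is the union of subgraphs
`A` and `B` with no odd cycles and `A ∩ B` is connected (hence nonempty), then `G`
has no odd cycle. -/
theorem union_no_odd_cycle {V : Type*} [Fintype V] (G : SimpleGraph V)
    (hG : G.Connected) (A B : G.Subgraph) (hAB : A ⊔ B = ⊤)
    (hA : ∀ (v : A.verts) (w : A.coe.Walk v v), w.IsCycle → ¬ Odd w.length)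
    (hB : ∀ (v : B.verts) (w : B.coe.Walk v v), w.IsCycle → ¬ Odd w.length)
    (hI : (A ⊓ B).Connected) :
    ∀ (v : V) (w : G.Walk v v), w.IsCycle → ¬ Odd w.length := by
  classical
  obtain ⟨cA, hcA⟩ := exists_bool_coloring (no_odd_closed_walk hA)
  obtain ⟨cB, hcB⟩ := exists_bool_coloring (no_odd_closed_walk hB)
  set fA : V → Bool := fun v => if h : v ∈ A.verts then cA ⟨v, h⟩ else false with hfA
  set fB0 : V → Bool := fun v => if h : v ∈ B.verts then cB ⟨v, h⟩ else false with hfB0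
  have hfAp : ∀ {a b : V}, A.Adj a b → fA a ≠ fA b := by
    intro a b hab
    have ha := hab.fst_mem
    have hb := hab.snd_mem
    simp only [hfA, dif_pos ha, dif_pos hb]
    exact hcA ((SimpleGraph.Subgraph.coe_adj A ⟨a, ha⟩ ⟨b, hb⟩).mpr hab)
  have hfB0p : ∀ {a b : V}, B.Adj a b → fB0 a ≠ fB0 b := by
    intro a b hab
    have ha := hab.fst_mem
    have hb := hab.snd_mem
    simp only [hfB0, dif_pos ha, dif_pos hb]
    exact hcB ((SimpleGraph.Subgraph.coe_adj B ⟨a, ha⟩ ⟨b, hb⟩).mpr hab)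
  obtain ⟨v0, hv0⟩ := hI.nonempty
  set fB : V → Bool := fun v => xor (fB0 v) (xor (fA v0) (fB0 v0)) with hfB
  have hfBp : ∀ {a b : V}, B.Adj a b → fB a ≠ fB b := by
    intro a b hab
    have := hfB0p hab
    simp only [hfB]
    revert this
    generalize fB0 a = x
    generalize fB0 b = y
    generalize xor (fA v0) (fB0 v0) = s
    revert x y s
    decide
  have hbase : fA v0 = fB v0 := by
    simp only [hfB]
    generalize fA v0 = x
    generalize fB0 v0 = y
    revert x y
    decide
  -- agreement on the intersection
  have hagree : ∀ v, v ∈ (A ⊓ B).verts → fA v = fB v := by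
    have claim : ∀ (a b : ↥(A ⊓ B).verts) (p : (A ⊓ B).coe.Walk a b),
        fA a = fB a → fA b = fB b := by
      intro a b p
      induction p with
      | nil => exact id
      | @cons a z b hadj q ih =>
        intro hbase'
        apply ih
        have h2 : (A ⊓ B).Adj a z := hadj
        have hAz : A.Adj a z := h2.1
        have hBz : B.Adj a z := h2.2
        have h1 := hfAp hAz
        have h2' := hfBp hBz
        revert hbase' h1 h2'
        generalize fA (a : V) = p1
        generalize fB (a : V) = p2
        generalize fA (z : V) = p3
        generalize fB (z : V) = p4
        revert p1 p2 p3 p4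
        decide
    intro v hv
    obtain ⟨p⟩ := hI.preconnected ⟨v0, hv0⟩ ⟨v, hv⟩
    exact claim _ _ p hbase
  -- the glued coloring
  set f : V → Bool := fun v => if v ∈ A.verts then fA v else fB v with hf
  have hfp : ∀ {a b : V}, G.Adj a b → f a ≠ f b := by
    intro a b hab
    have hab' : (A ⊔ B).Adj a b := by
      rw [hAB]
      exact (SimpleGraph.Subgraph.top_adj).mpr hab
    rcases (SimpleGraph.Subgraph.sup_adj).mp hab' with h | h
    · have ha := h.fst_mem
      have hb := h.snd_mem
      simp only [hf, if_pos ha, if_pos hb]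
      exact hfAp h
    · have ha := h.fst_mem
      have hb := h.snd_mem
      have key : ∀ c : V, c ∈ B.verts → f c = fB c := by
        intro c hc
        simp only [hf]
        split_ifs with hca
        · exact hagree c ⟨hca, hc⟩
        · rfl
      rw [key a ha, key b hb]
      exact hfBp h
  intro v w _ hodd
  have hc : G.Coloring Bool := SimpleGraph.Coloring.mk f (fun h => hfp h)
  have heven : Even w.length := (hc.even_length_iff_congr w).mpr Iff.rfl
  exact (Nat.not_even_iff_odd.mpr hodd) heven
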